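/- Let A be a finite set of k integers such that A ∩ (−A) = {0} (so 0 ∈ A and no nonzero element of A is the negative of an element of A). Then for any integer α with 0 ≤ α ≤ k, |Σ_α(A)| ≥ k(k−1)/2 − α(α−1)/2 + 1. -/

import Mathlib

open Finset

/-- `sigmaAtLeast A α` is the set of all subset sums of `A` coming from
subsets of size at least `α`. -/
def sigmaAtLeast (A : Finset ℤ) (α : ℕ) : Finset ℤ :=
  (A.powerset.filter (fun B => α ≤ B.card)).image (fun B => B.sum id)

lemma mem_sigmaAtLeast {A : Finset ℤ} {β : ℕ} {s : ℤ} :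
    s ∈ sigmaAtLeast A β ↔ ∃ B, B ⊆ A ∧ β ≤ B.card ∧ B.sum id = s := by
  simp only [sigmaAtLeast, Finset.mem_image, Finset.mem_filter, Finset.mem_powerset]
  constructor
  · rintro ⟨B, ⟨h1, h2⟩, h3⟩; exact ⟨B, h1, h2, h3⟩
  · rintro ⟨B, h1, h2, h3⟩; exact ⟨B, ⟨h1, h2⟩, h3⟩

/-- target counting function -/
def g : ℕ → ℕ → ℕ
  | 0, _ => 1
  | n+1, β => g n (β-1) + (n+1-β)

lemma gval : ∀ n β : ℕ, β ≤ n → (g n β : ℤ) * 2 = n*(n+1) - β*(β+1) + 2 := by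
  intro n
  induction n with
  | zero => intro β hβ; interval_cases β; simp [g]
  | succ n IH =>
    intro β hβ
    match β with
    | 0 =>
      have h0 := IH 0 (Nat.zero_le n)
      show ((g n 0 + (n+1-0) : ℕ) : ℤ) * 2 = _
      push_cast
      push_cast at h0
      linarith
    | b+1 =>
      have hb : b ≤ n := by omega
      have h0 := IH b hb
      show ((g n b + (n+1-(b+1)) : ℕ) : ℤ) * 2 = _
      have h1 : ((n+1-(b+1) : ℕ) : ℤ) = (n : ℤ) - b := by omega
      have h2 : ((n-b : ℕ) : ℤ) = (n : ℤ) - b := by omega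
      push_cast [h1, h2]
      push_cast at h0
      ring_nf
      ring_nf at h0
      linarith
lemma image_neg_image_neg (A : Finset ℤ) : (A.image (fun x => -x)).image (fun x => -x) = A := by
  rw [Finset.image_image]; simp

lemma sum_image_neg (B : Finset ℤ) : (B.image (fun x => -x)).sum id = -(B.sum id) := by
  rw [Finset.sum_image (fun x _ y _ h => neg_injective h)]
  simpa using Finset.sum_neg_distrib (f := id)

lemma sigma_neg (A : Finset ℤ) (β : ℕ) :
    sigmaAtLeast (A.image (fun x => -x)) β = (sigmaAtLeast A β).image (fun x => -x) := by
  ext s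
  simp only [Finset.mem_image, mem_sigmaAtLeast]
  constructor
  · rintro ⟨B, hBsub, hBcard, rfl⟩
    refine ⟨-(B.sum id), ⟨B.image (fun x => -x), ?_, ?_, sum_image_neg B⟩, by simp⟩
    · calc B.image (fun x => -x) ⊆ (A.image (fun x => -x)).image (fun x => -x) :=
            Finset.image_subset_image hBsub
        _ = A := image_neg_image_neg A
    · rwa [Finset.card_image_of_injective _ neg_injective]
  · rintro ⟨t, ⟨B, hBsub, hBcard, rfl⟩, rfl⟩
    refine ⟨B.image (fun x => -x), Finset.image_subset_image hBsub, ?_, ?_⟩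
    · rwa [Finset.card_image_of_injective _ neg_injective]
    · rw [sum_image_neg]
lemma step (n β : ℕ) (hβ : β ≤ n+1) (A : Finset ℤ) (hcard : A.card = n+1)
    (h0 : (0:ℤ) ∉ A) (hneg : ∀ x ∈ A, -x ∉ A)
    (a : ℤ) (ha : a ∈ A) (hmax : ∀ x ∈ A, |x| ≤ a)
    (IH : g n (β-1) ≤ (sigmaAtLeast (A.erase a) (β-1)).card) :
    g (n+1) β ≤ (sigmaAtLeast A β).card := by
  have hapos : 0 < a := by
    rcases lt_or_eq_of_le (le_trans (abs_nonneg a) (hmax a ha)) with h | h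
    · exact h
    · exact absurd (h ▸ ha) h0
  set A' := A.erase a with hA'def
  have hA'card : A'.card = n := by
    rw [hA'def, Finset.card_erase_of_mem ha, hcard]; rfl
  have hA'A : A' ⊆ A := Finset.erase_subset a A
  have habs : ∀ x ∈ A', |x| < a := by
    intro x hx
    have hxA : x ∈ A := hA'A hx
    rcases lt_or_eq_of_le (hmax x hxA) with h | h
    · exact h
    · exfalso
      rcases abs_eq (le_of_lt hapos) |>.1 h with h1 | h1
      · exact Finset.ne_of_mem_erase hx h1
      · exact hneg x hxA (by rw [h1, neg_neg]; exact ha)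
  have h0A' : (0:ℤ) ∉ A' := fun h => h0 (hA'A h)
  set β' := β - 1 with hβ'def
  have hβ'n : β' ≤ n := by omega
  -- the minimum of sigmaAtLeast A' β'
  obtain ⟨B0, hB0s, hB0c⟩ := Finset.exists_subset_card_eq (show β' ≤ A'.card by omega)
  have hne : (sigmaAtLeast A' β').Nonempty :=
    ⟨B0.sum id, mem_sigmaAtLeast.2 ⟨B0, hB0s, le_of_eq hB0c.symm, rfl⟩⟩
  set μ := (sigmaAtLeast A' β').min' hne with hμdef
  obtain ⟨J, hJsub, hJcard, hJsum⟩ := mem_sigmaAtLeast.1 (Finset.min'_mem _ hne)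
  have hJA : J ⊆ A := hJsub.trans hA'A
  have hJn : J.card ≤ n := hA'card ▸ Finset.card_le_card hJsub
  -- the "low" part of sigmaAtLeast A β
  set low := (sigmaAtLeast A β).filter (fun s => s < μ + a) with hlowdef
  -- membership helpers
  have hmem0 : β ≤ J.card → μ + 0 ∈ low := by
    intro hc
    refine Finset.mem_filter.2 ⟨mem_sigmaAtLeast.2 ⟨J, hJA, hc, by rw [hJsum]; ring⟩, ?_⟩
    simpa using hapos
  have hmemAdd : ∀ d ∈ A' \ J, μ + d ∈ low := by
    intro d hd
    obtain ⟨hdA', hdJ⟩ := Finset.mem_sdiff.1 hd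
    refine Finset.mem_filter.2 ⟨mem_sigmaAtLeast.2 ⟨insert d J, ?_, ?_, ?_⟩, ?_⟩
    · exact Finset.insert_subset (hA'A hdA') hJA
    · rw [Finset.card_insert_of_notMem hdJ]; omega
    · rw [Finset.sum_insert hdJ, hJsum]; simp [add_comm, hμdef]
    · have := habs d hdA'
      have : d < a := (abs_lt.1 this).2
      omega
  have hmemRem : β + 1 ≤ J.card → ∀ j ∈ J, μ + (-j) ∈ low := by
    intro hc j hj
    refine Finset.mem_filter.2 ⟨mem_sigmaAtLeast.2 ⟨J.erase j, ?_, ?_, ?_⟩, ?_⟩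
    · exact (Finset.erase_subset j J).trans hJA
    · rw [Finset.card_erase_of_mem hj]; omega
    · rw [Finset.sum_erase_eq_sub hj, hJsum]; simp [sub_eq_add_neg, hμdef]
    · have := habs j (hJsub hj)
      have : -j < a := by
        have := abs_lt.1 this; omega
      omega
  -- counting the low part
  have hlowcard : n + 1 - β ≤ low.card := by
    by_cases hc1 : β + 1 ≤ J.card
    · -- D = insert 0 ((A' \ J) ∪ J.image neg)
      set D : Finset ℤ := insert 0 ((A' \ J) ∪ J.image (fun x => -x)) with hDdef
      have hdisj : Disjoint (A' \ J) (J.image (fun x => -x)) := by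
        rw [Finset.disjoint_left]
        intro x hx hx'
        obtain ⟨j, hj, rfl⟩ := Finset.mem_image.1 hx'
        exact hneg j (hJA hj) (hA'A (Finset.mem_sdiff.1 hx).1)
      have h0nmem : (0:ℤ) ∉ (A' \ J) ∪ J.image (fun x => -x) := by
        intro h
        rcases Finset.mem_union.1 h with h | h
        · exact h0A' (Finset.mem_sdiff.1 h).1
        · obtain ⟨j, hj, hj0⟩ := Finset.mem_image.1 h
          exact h0 (by rw [show j = (0:ℤ) by omega] at hj; exact hJA hj)
      have hDcard : D.card = n + 1 := by
        rw [hDdef, Finset.card_insert_of_notMem h0nmem,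
          Finset.card_union_of_disjoint hdisj, Finset.card_sdiff_of_subset hJsub,
          Finset.card_image_of_injective _ neg_injective, hA'card]
        omega
      have hDsub : D.image (fun d => μ + d) ⊆ low := by
        intro x hx
        obtain ⟨d, hd, rfl⟩ := Finset.mem_image.1 hx
        rw [hDdef] at hd
        rcases Finset.mem_insert.1 hd with rfl | hd
        · exact hmem0 (by omega)
        · rcases Finset.mem_union.1 hd with hd | hd
          · exact hmemAdd d hd
          · obtain ⟨j, hj, rfl⟩ := Finset.mem_image.1 hd
            exact hmemRem hc1 j hj
      calc n + 1 - β ≤ D.card := by omega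
        _ = (D.image (fun d => μ + d)).card :=
            (Finset.card_image_of_injective _ (add_right_injective μ)).symm
        _ ≤ low.card := Finset.card_le_card hDsub
    · by_cases hc2 : β ≤ J.card
      · set D : Finset ℤ := insert 0 (A' \ J) with hDdef
        have h0nmem : (0:ℤ) ∉ A' \ J := fun h => h0A' (Finset.mem_sdiff.1 h).1
        have hDcard : D.card = n - J.card + 1 := by
          rw [hDdef, Finset.card_insert_of_notMem h0nmem, Finset.card_sdiff_of_subset hJsub, hA'card]
        have hDsub : D.image (fun d => μ + d) ⊆ low := by
          intro x hx
          obtain ⟨d, hd, rfl⟩ := Finset.mem_image.1 hx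
          rw [hDdef] at hd
          rcases Finset.mem_insert.1 hd with rfl | hd
          · exact hmem0 hc2
          · exact hmemAdd d hd
        calc n + 1 - β ≤ D.card := by omega
          _ = (D.image (fun d => μ + d)).card :=
              (Finset.card_image_of_injective _ (add_right_injective μ)).symm
          _ ≤ low.card := Finset.card_le_card hDsub
      · have hDsub : (A' \ J).image (fun d => μ + d) ⊆ low := by
          intro x hx
          obtain ⟨d, hd, rfl⟩ := Finset.mem_image.1 hx
          exact hmemAdd d hd
        have : (A' \ J).card = n - J.card := by
          rw [Finset.card_sdiff_of_subset hJsub, hA'card]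
        calc n + 1 - β ≤ (A' \ J).card := by omega
          _ = ((A' \ J).image (fun d => μ + d)).card :=
              (Finset.card_image_of_injective _ (add_right_injective μ)).symm
          _ ≤ low.card := Finset.card_le_card hDsub
  -- the "high" part
  set X := (sigmaAtLeast A' β').image (fun s => a + s) with hXdef
  have hXsub : X ⊆ sigmaAtLeast A β := by
    intro x hx
    obtain ⟨s, hs, rfl⟩ := Finset.mem_image.1 hx
    obtain ⟨B, hBsub, hBcard, rfl⟩ := mem_sigmaAtLeast.1 hs
    have haB : a ∉ B := fun h => Finset.notMem_erase a A (hBsub h)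
    refine mem_sigmaAtLeast.2 ⟨insert a B, ?_, ?_, ?_⟩
    · exact Finset.insert_subset ha (hBsub.trans hA'A)
    · rw [Finset.card_insert_of_notMem haB]; omega
    · rw [Finset.sum_insert haB]; rfl
  have hXcard : g n β' ≤ X.card := by
    rw [hXdef, Finset.card_image_of_injective _ (add_right_injective a)]
    exact IH
  have hdisjXlow : Disjoint low X := by
    rw [Finset.disjoint_left]
    intro x hx hx'
    obtain ⟨s, hs, rfl⟩ := Finset.mem_image.1 hx'
    have h1 : a + s < μ + a := (Finset.mem_filter.1 hx).2
    have h2 : μ ≤ s := Finset.min'_le _ _ hs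
    omega
  have hsub : low ∪ X ⊆ sigmaAtLeast A β :=
    Finset.union_subset (Finset.filter_subset _ _) hXsub
  calc g (n+1) β = g n β' + (n+1-β) := rfl
    _ ≤ X.card + low.card := Nat.add_le_add hXcard hlowcard
    _ = low.card + X.card := Nat.add_comm _ _
    _ = (low ∪ X).card := (Finset.card_union_of_disjoint hdisjXlow).symm
    _ ≤ (sigmaAtLeast A β).card := Finset.card_le_card hsub
lemma main : ∀ n β (A : Finset ℤ), β ≤ n → A.card = n → (0:ℤ) ∉ A →
    (∀ x ∈ A, -x ∉ A) → g n β ≤ (sigmaAtLeast A β).card := by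
  intro n
  induction n with
  | zero =>
    intro β A hβ hcard h0 hneg
    have hβ0 : β = 0 := Nat.le_zero.1 hβ
    subst hβ0
    rw [Finset.card_eq_zero] at hcard; subst hcard
    show 1 ≤ _
    simp [sigmaAtLeast]
  | succ n IH =>
    intro β A hβ hcard h0 hneg
    have hA_ne : A.Nonempty := Finset.card_pos.1 (by omega)
    obtain ⟨a, haA, hamax⟩ := Finset.exists_max_image A (fun x => |x|) hA_ne
    have hane : a ≠ 0 := fun h => h0 (h ▸ haA)
    rcases lt_or_gt_of_ne hane with hlt | hgt
    · -- a < 0 : negate the whole set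
      set B := A.image (fun x => -x) with hB
      have hBcard : B.card = n+1 := by
        rw [hB, Finset.card_image_of_injective _ neg_injective, hcard]
      have h0B : (0:ℤ) ∉ B := by
        intro h; obtain ⟨x, hx, hx0⟩ := Finset.mem_image.1 h
        exact h0 (by rw [show x = (0:ℤ) by omega] at hx; exact hx)
      have hnegB : ∀ y ∈ B, -y ∉ B := by
        intro y hy hy'
        obtain ⟨x, hx, rfl⟩ := Finset.mem_image.1 hy
        obtain ⟨z, hz, hzy⟩ := Finset.mem_image.1 hy'
        have hzx : z = -x := by omega
        exact hneg z hz (by rw [hzx, neg_neg]; exact hx)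
      have hmemB : -a ∈ B := Finset.mem_image_of_mem _ haA
      have hmaxB : ∀ y ∈ B, |y| ≤ -a := by
        intro y hy; obtain ⟨x, hx, rfl⟩ := Finset.mem_image.1 hy
        rw [abs_neg]
        calc |x| ≤ |a| := hamax x hx
          _ = -a := abs_of_neg hlt
      have heqcard : (sigmaAtLeast A β).card = (sigmaAtLeast B β).card := by
        rw [hB, sigma_neg, Finset.card_image_of_injective _ neg_injective]
      rw [heqcard]
      refine step n β hβ B hBcard h0B hnegB (-a) hmemB hmaxB
        (IH (β-1) (B.erase (-a)) (by omega) ?_ ?_ ?_)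
      · rw [Finset.card_erase_of_mem hmemB, hBcard]; rfl
      · exact fun h => h0B (Finset.erase_subset _ _ h)
      · exact fun x hx h' => hnegB x (Finset.erase_subset _ _ hx) (Finset.erase_subset _ _ h')
    · -- a > 0
      have hmaxA : ∀ x ∈ A, |x| ≤ a := by
        intro x hx
        calc |x| ≤ |a| := hamax x hx
          _ = a := abs_of_pos hgt
      refine step n β hβ A hcard h0 hneg a haA hmaxA
        (IH (β-1) (A.erase a) (by omega) ?_ ?_ ?_)
      · rw [Finset.card_erase_of_mem haA, hcard]; rfl
      · exact fun h => h0 (Finset.erase_subset _ _ h)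
      · exact fun x hx h' => hneg x (Finset.erase_subset _ _ hx) (Finset.erase_subset _ _ h')
theorem stmt_2 (k α : ℕ) (A : Finset ℤ) (hcard : A.card = k)
    (hA : A ∩ A.image (fun x => -x) = {0}) (hα : α ≤ k) :
    ((sigmaAtLeast A α).card : ℤ) ≥
      (k : ℤ) * ((k : ℤ) - 1) / 2 - (α : ℤ) * ((α : ℤ) - 1) / 2 + 1 := by
  have h0A : (0:ℤ) ∈ A := by
    have h : (0:ℤ) ∈ A ∩ A.image (fun x => -x) := by rw [hA]; exact Finset.mem_singleton_self 0
    exact (Finset.mem_inter.1 h).1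
  have hk1 : 1 ≤ k := by
    rw [← hcard]; exact Finset.card_pos.2 ⟨0, h0A⟩
  set A' := A.erase 0 with hA'def
  have hA'card : A'.card = k - 1 := by rw [hA'def, Finset.card_erase_of_mem h0A, hcard]
  have h0' : (0:ℤ) ∉ A' := Finset.notMem_erase _ _
  have hneg' : ∀ x ∈ A', -x ∉ A' := by
    intro x hx hx'
    have hxA : x ∈ A := Finset.erase_subset _ _ hx
    have hxne : x ≠ 0 := (Finset.mem_erase.1 hx).1
    have : x ∈ A ∩ A.image (fun y => -y) := by
      refine Finset.mem_inter.2 ⟨hxA, Finset.mem_image.2 ⟨-x, Finset.erase_subset _ _ hx', neg_neg x⟩⟩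
    rw [hA] at this
    exact hxne (Finset.mem_singleton.1 this)
  have hσ : sigmaAtLeast A α = sigmaAtLeast A' (α-1) := by
    ext s
    rw [mem_sigmaAtLeast, mem_sigmaAtLeast]
    constructor
    · rintro ⟨B, hBsub, hBcard, rfl⟩
      refine ⟨B.erase 0, Finset.erase_subset_erase 0 hBsub, ?_, ?_⟩
      · have := Finset.pred_card_le_card_erase (s := B) (a := (0:ℤ))
        omega
      · exact Finset.sum_erase B rfl
    · rintro ⟨B, hBsub, hBcard, rfl⟩
      have h0B : (0:ℤ) ∉ B := fun h => h0' (hBsub h)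
      refine ⟨insert 0 B, Finset.insert_subset h0A (hBsub.trans (Finset.erase_subset _ _)), ?_, ?_⟩
      · rw [Finset.card_insert_of_notMem h0B]; omega
      · rw [Finset.sum_insert h0B]; simp
  have hg : g (k-1) (α-1) ≤ (sigmaAtLeast A α).card := by
    rw [hσ]
    exact main (k-1) (α-1) A' (by omega) hA'card h0' hneg'
  have hgz : (g (k-1) (α-1) : ℤ) ≤ ((sigmaAtLeast A α).card : ℤ) := by exact_mod_cast hg
  have hgval := gval (k-1) (α-1) (by omega)
  have hck : ((k-1 : ℕ) : ℤ) = (k:ℤ) - 1 := by omega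
  have hcα : ((α-1:ℕ):ℤ) * (((α-1:ℕ):ℤ)+1) = (α:ℤ)*((α:ℤ)-1) := by
    rcases Nat.eq_zero_or_pos α with h | h
    · subst h; simp
    · have : ((α-1:ℕ):ℤ) = (α:ℤ)-1 := by omega
      rw [this]; ring
  rw [hck, hcα] at hgval
  have hEvenK : 2 * ((k:ℤ)*((k:ℤ)-1)/2) = (k:ℤ)*((k:ℤ)-1) := by
    have h : (k:ℤ)*((k:ℤ)-1) = ((k:ℤ)-1)*(((k:ℤ)-1)+1) := by ring
    rw [h]; exact Int.two_mul_ediv_two_of_even (Int.even_mul_succ_self _)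
  have hEvenA : 2 * ((α:ℤ)*((α:ℤ)-1)/2) = (α:ℤ)*((α:ℤ)-1) := by
    have h : (α:ℤ)*((α:ℤ)-1) = ((α:ℤ)-1)*(((α:ℤ)-1)+1) := by ring
    rw [h]; exact Int.two_mul_ediv_two_of_even (Int.even_mul_succ_self _)
  linarith
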